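/- Let (𝕄, Δ) be a Malcev bialgebra, where 𝕄 is the 7-dimensional simple non-Lie Malcev algebra, and suppose the radical R of the Drinfeld double D(𝕄) is nonzero. Then R = R^⊥ (the orthogonal complement of R in D(𝕄) with respect to the form Q), R² = 0, and D(𝕄) = 𝕄 + R is a semidirect sum (𝕄 ∩ R = 0 and 𝕄 ⊕ R = D(𝕄) as vector spaces). -/

import Mathlib

open TensorProduct Module

namespace MalcevPaper

variable {F : Type*} [Field F] {M : Type*} [AddCommGroup M] [Module F M]

/-- The Jacobian `J(x,y,z) = (xy)z + (yz)x + (zx)y` of a bilinear multiplication. -/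
def jac (mul : M →ₗ[F] M →ₗ[F] M) (x y z : M) : M :=
  mul (mul x y) z + mul (mul y z) x + mul (mul z x) y

/-- A bilinear multiplication is a Malcev multiplication if it is anticommutative and
satisfies `J(x,y,xz) = J(x,y,z)x`. -/
def IsMalcevMul (mul : M →ₗ[F] M →ₗ[F] M) : Prop :=
  (∀ a b : M, mul a b = - mul b a) ∧
  ∀ x y z : M, jac mul x y (mul x z) = mul (jac mul x y z) x

/-- The Jacobian for a plain (unbundled) multiplication. -/
def jacFun (mul : M → M → M) (x y z : M) : M :=
  mul (mul x y) z + mul (mul y z) x + mul (mul z x) y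

/-- A plain multiplication makes `M` a Malcev algebra over `F` if it is bilinear,
anticommutative, and satisfies the Malcev identity `J(x,y,xz) = J(x,y,z)x`. -/
def IsMalcevFun (F : Type*) [Field F] {M : Type*} [AddCommGroup M] [Module F M]
    (mul : M → M → M) : Prop :=
  (∀ a b c : M, mul (a + b) c = mul a c + mul b c) ∧
  (∀ (t : F) (a b : M), mul (t • a) b = t • mul a b) ∧
  (∀ a b c : M, mul a (b + c) = mul a b + mul a c) ∧
  (∀ (t : F) (a b : M), mul a (t • b) = t • mul a b) ∧
  (∀ a b : M, mul a b = - mul b a) ∧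
  ∀ x y z : M, jacFun mul x y (mul x z) = mul (jacFun mul x y z) x

/-- The multiplication of the dual algebra of a coalgebra `(M, Δ)`:
`⟨fg, a⟩ = Σ ⟨f, a₍₁₎⟩⟨g, a₍₂₎⟩`. -/
noncomputable def dualMul (Δ : M →ₗ[F] M ⊗[F] M) (f g : Dual F M) : Dual F M :=
  (TensorProduct.lid F F).toLinearMap ∘ₗ TensorProduct.map f g ∘ₗ Δ

/-- The action `f ⇀ a = Σ a₍₁₎ ⟨f, a₍₂₎⟩`. -/
noncomputable def rAct (Δ : M →ₗ[F] M ⊗[F] M) (f : Dual F M) (a : M) : M :=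
  TensorProduct.lift (((LinearMap.lsmul F M).comp f).flip) (Δ a)

/-- The action `a ↼ f = Σ ⟨f, a₍₁₎⟩ a₍₂₎`. -/
noncomputable def lAct (Δ : M →ₗ[F] M ⊗[F] M) (f : Dual F M) (a : M) : M :=
  TensorProduct.lift ((LinearMap.lsmul F M).comp f) (Δ a)

/-- The multiplication of the Drinfeld double `D(M) = M ⊕ M*` of an algebra `(M, mul)`
with comultiplication `Δ`:
`(a+f)(b+g) = (ab + f⇀b + a↼g) + (fg + f↽b + a⇁g)`. -/
noncomputable def doubleMul (mul : M →ₗ[F] M →ₗ[F] M) (Δ : M →ₗ[F] M ⊗[F] M) :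
    M × Dual F M → M × Dual F M → M × Dual F M :=
  fun p q =>
    (mul p.1 q.1 + rAct Δ p.2 q.1 + lAct Δ q.2 p.1,
      dualMul Δ p.2 q.2 + p.2 ∘ₗ mul q.1 + q.2 ∘ₗ mul.flip p.1)

/-- `(M, Δ)` is a Malcev bialgebra when the Drinfeld double `D(M)` is a Malcev algebra. -/
def IsMalcevBialgebra (mul : M →ₗ[F] M →ₗ[F] M) (Δ : M →ₗ[F] M ⊗[F] M) : Prop :=
  IsMalcevFun F (doubleMul mul Δ)

/-- The coboundary comultiplication `Δ_r(a) = [r,a] = Σᵢ aᵢa ⊗ bᵢ − aᵢ ⊗ abᵢ`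
for `r = Σᵢ aᵢ ⊗ bᵢ`. -/
noncomputable def coboundary (mul : M →ₗ[F] M →ₗ[F] M) (r : M ⊗[F] M) :
    M →ₗ[F] M ⊗[F] M :=
  (LinearMap.rTensorHom M ∘ₗ mul.flip).flip r - (LinearMap.lTensorHom M ∘ₗ mul).flip r

/-- On generators, `(x⊗y)⊗(u⊗v) ↦ (xu)⊗y⊗v`; used for `Σ aᵢaⱼ ⊗ bᵢ ⊗ bⱼ`. -/
noncomputable def cybT1 (mul : M →ₗ[F] M →ₗ[F] M) :
    (M ⊗[F] M) ⊗[F] (M ⊗[F] M) →ₗ[F] M ⊗[F] (M ⊗[F] M) :=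
  TensorProduct.map (TensorProduct.lift mul) LinearMap.id ∘ₗ
    (TensorProduct.tensorTensorTensorComm F M M M M).toLinearMap

/-- On generators, `(x⊗y)⊗(u⊗v) ↦ x⊗(uy)⊗v`; used for `Σ aᵢ ⊗ aⱼbᵢ ⊗ bⱼ`. -/
noncomputable def cybT2 (mul : M →ₗ[F] M →ₗ[F] M) :
    (M ⊗[F] M) ⊗[F] (M ⊗[F] M) →ₗ[F] M ⊗[F] (M ⊗[F] M) :=
  (TensorProduct.leftComm F M M M).toLinearMap ∘ₗ
    TensorProduct.map (TensorProduct.lift mul.flip) LinearMap.id ∘ₗ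
    (TensorProduct.tensorTensorTensorComm F M M M M).toLinearMap ∘ₗ
    TensorProduct.map (TensorProduct.comm F M M).toLinearMap LinearMap.id

/-- On generators, `(x⊗y)⊗(u⊗v) ↦ x⊗u⊗(yv)`; used for `Σ aᵢ ⊗ aⱼ ⊗ bᵢbⱼ`. -/
noncomputable def cybT3 (mul : M →ₗ[F] M →ₗ[F] M) :
    (M ⊗[F] M) ⊗[F] (M ⊗[F] M) →ₗ[F] M ⊗[F] (M ⊗[F] M) :=
  (TensorProduct.assoc F M M M).toLinearMap ∘ₗ
    TensorProduct.map LinearMap.id (TensorProduct.lift mul) ∘ₗ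
    (TensorProduct.tensorTensorTensorComm F M M M M).toLinearMap

/-- The classical Yang–Baxter element
`C_M(r) = Σ_{i,j} aᵢaⱼ ⊗ bᵢ ⊗ bⱼ − aᵢ ⊗ aⱼbᵢ ⊗ bⱼ + aᵢ ⊗ aⱼ ⊗ bᵢbⱼ` for `r = Σᵢ aᵢ ⊗ bᵢ`. -/
noncomputable def cyb (mul : M →ₗ[F] M →ₗ[F] M) (r : M ⊗[F] M) : M ⊗[F] (M ⊗[F] M) :=
  cybT1 mul (r ⊗ₜ[F] r) - cybT2 mul (r ⊗ₜ[F] r) + cybT3 mul (r ⊗ₜ[F] r)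

/-- Apply `f`, `g`, `h` to the three tensor factors of an element of `M ⊗ M ⊗ M`. -/
noncomputable def act3 (f g h : M →ₗ[F] M) :
    M ⊗[F] (M ⊗[F] M) →ₗ[F] M ⊗[F] (M ⊗[F] M) :=
  TensorProduct.map f (TensorProduct.map g h)

/-- A submodule is a (two-sided) ideal for a multiplication. -/
def IsIdealFun (mul : M → M → M) (I : Submodule F M) : Prop :=
  ∀ u ∈ I, ∀ a : M, mul a u ∈ I ∧ mul u a ∈ I

/-- The derived series `I ⊇ II ⊇ (II)(II) ⊇ …` of a submodule. -/
noncomputable def derivedSeries (mul : M → M → M) (I : Submodule F M) : ℕ → Submodule F M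
  | 0 => I
  | n + 1 => Submodule.span F
      (Set.image2 mul (derivedSeries mul I n : Set M) (derivedSeries mul I n : Set M))

/-- A submodule is solvable if its derived series reaches `0`. -/
def IsSolvableSub (mul : M → M → M) (I : Submodule F M) : Prop :=
  ∃ n, derivedSeries mul I n = ⊥

/-- `R` is the radical: the largest solvable ideal. -/
def IsRadicalOf (mul : M → M → M) (R : Submodule F M) : Prop :=
  IsIdealFun mul R ∧ IsSolvableSub mul R ∧
    ∀ I : Submodule F M, IsIdealFun mul I → IsSolvableSub mul I → I ≤ R

/-- `h, x, x', y, y', z, z'` is a standard basis of the 7-dimensional simple non-Lie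
Malcev algebra `(M, mul)`. -/
structure IsStdBasis (mul : M →ₗ[F] M →ₗ[F] M) (h x x' y y' z z' : M) : Prop where
  indep : LinearIndependent F ![h, x, x', y, y', z, z']
  spans : Submodule.span F (Set.range ![h, x, x', y, y', z, z']) = ⊤
  anti : ∀ u v : M, mul u v = - mul v u
  mul_h_x : mul h x = (2:F) • x
  mul_h_y : mul h y = (2:F) • y
  mul_h_z : mul h z = (2:F) • z
  mul_h_x' : mul h x' = -((2:F) • x')
  mul_h_y' : mul h y' = -((2:F) • y')
  mul_h_z' : mul h z' = -((2:F) • z')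
  mul_x_x' : mul x x' = h
  mul_y_y' : mul y y' = h
  mul_z_z' : mul z z' = h
  mul_x_y : mul x y = (2:F) • z'
  mul_y_z : mul y z = (2:F) • x'
  mul_z_x : mul z x = (2:F) • y'
  mul_x'_y' : mul x' y' = -((2:F) • z)
  mul_y'_z' : mul y' z' = -((2:F) • x)
  mul_z'_x' : mul z' x' = -((2:F) • y)
  mul_x_y' : mul x y' = 0
  mul_x_z' : mul x z' = 0
  mul_x'_y : mul x' y = 0
  mul_x'_z : mul x' z = 0
  mul_y_z' : mul y z' = 0
  mul_y'_z : mul y' z = 0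

/-- `B` and `S` are isomorphic as (sub)algebras of `(M, mul)`. -/
def SubAlgIso (mul : M →ₗ[F] M →ₗ[F] M) (B S : Submodule F M)
    (hB : ∀ a ∈ B, ∀ b ∈ B, mul a b ∈ B) : Prop :=
  ∃ e : B →ₗ[F] M, Function.Injective e ∧ LinearMap.range e = S ∧
    ∀ a b : B, e ⟨mul a b, hB a a.2 b b.2⟩ = mul (e a) (e b)


lemma pair_rAct (Δ : M →ₗ[F] M ⊗[F] M) (f h : Dual F M) (b : M) :
    h (rAct Δ f b) = f (lAct Δ h b) := by
  unfold rAct lAct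
  induction Δ b using TensorProduct.induction_on with
  | zero => simp
  | tmul x y => simp [TensorProduct.lift.tmul]; ring
  | add s t hs ht => simp only [map_add, hs, ht]

lemma pair_lAct (Δ : M →ₗ[F] M ⊗[F] M) (g h : Dual F M) (a : M) :
    h (lAct Δ g a) = dualMul Δ g h a := by
  unfold lAct dualMul
  simp only [LinearMap.comp_apply, LinearEquiv.coe_toLinearMap]
  induction Δ a using TensorProduct.induction_on with
  | zero => simp
  | tmul x y => simp [TensorProduct.lift.tmul]
  | add s t hs ht => simp only [map_add, hs, ht]

lemma dualMul_pair (Δ : M →ₗ[F] M ⊗[F] M) (f g : Dual F M) (c : M) :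
    dualMul Δ f g c = f (rAct Δ g c) := by
  unfold rAct dualMul
  simp only [LinearMap.comp_apply, LinearEquiv.coe_toLinearMap]
  induction Δ c using TensorProduct.induction_on with
  | zero => simp
  | tmul x y => simp [TensorProduct.lift.tmul]; ring
  | add s t hs ht => simp only [map_add, hs, ht]

lemma rAct_zero (Δ : M →ₗ[F] M ⊗[F] M) (a : M) : rAct Δ (0 : Dual F M) a = 0 := by
  unfold rAct
  induction Δ a using TensorProduct.induction_on with
  | zero => simp
  | tmul x y => simp [TensorProduct.lift.tmul]
  | add s t hs ht => simp only [map_add, hs, ht, add_zero]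

lemma lAct_zero (Δ : M →ₗ[F] M ⊗[F] M) (a : M) : lAct Δ (0 : Dual F M) a = 0 := by
  unfold lAct
  induction Δ a using TensorProduct.induction_on with
  | zero => simp
  | tmul x y => simp [TensorProduct.lift.tmul]
  | add s t hs ht => simp only [map_add, hs, ht, add_zero]

lemma dualMul_zero_left (Δ : M →ₗ[F] M ⊗[F] M) (g : Dual F M) :
    dualMul Δ (0 : Dual F M) g = 0 := by
  ext a
  unfold dualMul
  simp only [LinearMap.comp_apply, LinearEquiv.coe_toLinearMap, LinearMap.zero_apply]
  induction Δ a using TensorProduct.induction_on with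
  | zero => simp
  | tmul x y => simp
  | add s t hs ht => simp only [map_add, hs, ht, add_zero]

/-- The bilinear form `Q` on the double. -/
noncomputable def Qform : (M × Dual F M) →ₗ[F] (M × Dual F M) →ₗ[F] F :=
  LinearMap.mk₂ F (fun p q => q.2 p.1 + p.2 q.1)
    (by intro p p' q; simp only [Prod.fst_add, Prod.snd_add, map_add, LinearMap.add_apply]; ring)
    (by intro c p q; simp only [Prod.smul_fst, Prod.smul_snd, map_smul, LinearMap.smul_apply,
          smul_eq_mul]; ring)
    (by intro p q q'; simp only [Prod.fst_add, Prod.snd_add, map_add, LinearMap.add_apply]; ring)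
    (by intro c p q; simp only [Prod.smul_fst, Prod.smul_snd, map_smul, LinearMap.smul_apply,
          smul_eq_mul]; ring)

lemma Qform_apply (p q : M × Dual F M) : Qform p q = q.2 p.1 + p.2 q.1 := rfl

lemma Qform_symm (p q : M × Dual F M) : Qform p q = Qform q p := by
  simp only [Qform_apply]; ring

lemma Qform_nondeg (p : M × Dual F M) (h : ∀ q, Qform p q = 0) : p = 0 := by
  have h1 : p.1 = 0 := by
    rw [← Module.forall_dual_apply_eq_zero_iff F p.1]
    intro φ
    have := h (0, φ)
    simpa [Qform_apply] using this
  have h2 : p.2 = 0 := by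
    ext b
    have := h (b, 0)
    simpa [Qform_apply] using this
  exact Prod.ext h1 h2

lemma Qform_invariant (mul : M →ₗ[F] M →ₗ[F] M) (Δ : M →ₗ[F] M ⊗[F] M)
    (u v w : M × Dual F M) :
    Qform (doubleMul mul Δ u v) w = Qform u (doubleMul mul Δ v w) := by
  simp only [doubleMul, Qform_apply, map_add, LinearMap.add_apply, LinearMap.comp_apply,
    LinearMap.flip_apply]
  rw [pair_rAct Δ u.2 w.2 v.1, pair_lAct Δ v.2 w.2 u.1, dualMul_pair Δ u.2 v.2 w.1]
  ring

lemma doubleMul_inl (mul : M →ₗ[F] M →ₗ[F] M) (Δ : M →ₗ[F] M ⊗[F] M) (a b : M) :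
    doubleMul mul Δ (a, 0) (b, 0) = (mul a b, 0) := by
  simp only [doubleMul, rAct_zero, lAct_zero, dualMul_zero_left, add_zero,
    LinearMap.zero_comp, Prod.mk.injEq]

section DerivedSeries
variable {N : Type*} [AddCommGroup N] [Module F N]

lemma derivedSeries_succ (B : N → N → N) (I : Submodule F N) (n : ℕ) :
    derivedSeries (F := F) B I (n + 1) =
      Submodule.span F (Set.image2 B (derivedSeries (F := F) B I n : Set N)
        (derivedSeries (F := F) B I n : Set N)) := rfl

lemma derivedSeries_mono (B : N → N → N) {I J : Submodule F N} (h : I ≤ J) :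
    ∀ n, derivedSeries (F := F) B I n ≤ derivedSeries (F := F) B J n
  | 0 => h
  | (n + 1) => by
      rw [derivedSeries_succ, derivedSeries_succ]
      exact Submodule.span_mono (Set.image2_subset (derivedSeries_mono B h n)
        (derivedSeries_mono B h n))

lemma derivedSeries_fixed (B : N → N → N) {S : Submodule F N}
    (h : Submodule.span F (Set.image2 B (S : Set N) (S : Set N)) = S) :
    ∀ n, derivedSeries (F := F) B S n = S
  | 0 => rfl
  | (n + 1) => by rw [derivedSeries_succ, derivedSeries_fixed B h n, h]

lemma derivedSeries_map (B : N → N → N) (π : N →ₗ[F] N)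
    (hπ : ∀ u v, π (B u v) = B (π u) (π v)) (S : Submodule F N) :
    ∀ n, Submodule.map π (derivedSeries (F := F) B S n) ≤
      derivedSeries (F := F) B (Submodule.map π S) n
  | 0 => le_rfl
  | (n + 1) => by
      rw [derivedSeries_succ, derivedSeries_succ, Submodule.map_span]
      apply Submodule.span_mono
      rw [Set.image_image2]
      have h1 : Set.image2 (fun a b => π (B a b)) (derivedSeries (F := F) B S n : Set N)
          (derivedSeries (F := F) B S n : Set N) =
          Set.image2 B (π '' (derivedSeries (F := F) B S n : Set N))
            (π '' (derivedSeries (F := F) B S n : Set N)) := by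
        rw [Set.image2_image_left, Set.image2_image_right]
        simp only [hπ]
      rw [h1]
      exact Set.image2_subset (derivedSeries_map B π hπ S n) (derivedSeries_map B π hπ S n)

end DerivedSeries

lemma IsStdBasis.mul_self {mul : M →ₗ[F] M →ₗ[F] M} {b1 b2 b3 b4 b5 b6 b7 : M}
    (hb : IsStdBasis mul b1 b2 b3 b4 b5 b6 b7) (h2 : (2:F) ≠ 0) (a : M) : mul a a = 0 := by
  have h := hb.anti a a
  have : (2:F) • mul a a = 0 := by rw [two_smul]; nth_rewrite 1 [h]; abel
  exact (smul_eq_zero.mp this).resolve_left h2 |>.symm ▸ rfl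

lemma stdBasis_simple (h2 : (2:F) ≠ 0) {mul : M →ₗ[F] M →ₗ[F] M}
    {b1 b2 b3 b4 b5 b6 b7 : M} (hb : IsStdBasis mul b1 b2 b3 b4 b5 b6 b7)
    (I : Submodule F M) (hI : ∀ u ∈ I, ∀ a : M, mul a u ∈ I) :
    I = ⊥ ∨ I = ⊤ := by
  by_cases hbot : I = ⊥
  · exact Or.inl hbot
  right
  -- first: b1 ∈ I
  obtain ⟨u, huI, hune⟩ := Submodule.exists_mem_ne_zero_of_ne_bot hbot
  have hsq := hb.mul_self h2
  have hu' : u ∈ Submodule.span F (Set.range ![b1, b2, b3, b4, b5, b6, b7]) := by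
    rw [hb.spans]; trivial
  rw [Submodule.mem_span_range_iff_exists_fun] at hu'
  obtain ⟨c, hc⟩ := hu'
  rw [Fin.sum_univ_seven] at hc
  simp only [show (![b1, b2, b3, b4, b5, b6, b7] : Fin 7 → M) 0 = b1 from rfl,
    show (![b1, b2, b3, b4, b5, b6, b7] : Fin 7 → M) 1 = b2 from rfl,
    show (![b1, b2, b3, b4, b5, b6, b7] : Fin 7 → M) 2 = b3 from rfl,
    show (![b1, b2, b3, b4, b5, b6, b7] : Fin 7 → M) 3 = b4 from rfl,
    show (![b1, b2, b3, b4, b5, b6, b7] : Fin 7 → M) 4 = b5 from rfl,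
    show (![b1, b2, b3, b4, b5, b6, b7] : Fin 7 → M) 5 = b6 from rfl,
    show (![b1, b2, b3, b4, b5, b6, b7] : Fin 7 → M) 6 = b7 from rfl] at hc
  have m1 : mul b1 u = (2 * c 1) • b2 + (-(2 * c 2)) • b3 + (2 * c 3) • b4
      + (-(2 * c 4)) • b5 + (2 * c 5) • b6 + (-(2 * c 6)) • b7 := by
    rw [← hc]
    simp only [map_add, map_smul, hb.mul_h_x, hb.mul_h_x', hb.mul_h_y, hb.mul_h_y',
      hb.mul_h_z, hb.mul_h_z', hsq]
    module
  have m2 : mul b1 (mul b1 u) = (4 * c 1) • b2 + (4 * c 2) • b3 + (4 * c 3) • b4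
      + (4 * c 4) • b5 + (4 * c 5) • b6 + (4 * c 6) • b7 := by
    rw [m1]
    simp only [map_add, map_smul, hb.mul_h_x, hb.mul_h_x', hb.mul_h_y, hb.mul_h_y',
      hb.mul_h_z, hb.mul_h_z']
    module
  have hm1I : mul b1 u ∈ I := hI u huI b1
  have hm2I : mul b1 (mul b1 u) ∈ I := hI _ hm1I b1
  have hvpI : mul b1 (mul b1 u) + (2:F) • mul b1 u ∈ I :=
    I.add_mem hm2I (I.smul_mem _ hm1I)
  have hvmI : mul b1 (mul b1 u) - (2:F) • mul b1 u ∈ I :=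
    I.sub_mem hm2I (I.smul_mem _ hm1I)
  have hvp : mul b1 (mul b1 u) + (2:F) • mul b1 u
      = (8 * c 1) • b2 + (8 * c 3) • b4 + (8 * c 5) • b6 := by
    rw [m2, m1]; module
  have hvm : mul b1 (mul b1 u) - (2:F) • mul b1 u
      = (8 * c 2) • b3 + (8 * c 4) • b5 + (8 * c 6) • b7 := by
    rw [m2, m1]; module
  rw [hvp] at hvpI
  rw [hvm] at hvmI
  have h4 : (4:F) ≠ 0 := by
    intro h; apply h2
    have : (4:F) = 2 * 2 := by norm_num
    rw [this] at h
    rcases mul_eq_zero.mp h with h | h <;> exact h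
  have hhI : (4 * c 0) • b1 ∈ I := by
    have he : (4 * c 0) • b1 = (4:F) • u - mul b1 (mul b1 u) := by
      rw [m2, ← hc]; module
    rw [he]
    exact I.sub_mem (I.smul_mem _ huI) hm2I
  have h8 : (8:F) ≠ 0 := by
    intro h; apply h2
    have : (8:F) = 2 * (2 * 2) := by norm_num
    rw [this] at h
    rcases mul_eq_zero.mp h with h | h
    · exact h
    · rcases mul_eq_zero.mp h with h | h <;> exact h
  -- now get b1 ∈ I
  have hb1 : b1 ∈ I := by
    have hsmulmem : ∀ (t : F) (v : M), t ≠ 0 → t • v ∈ I → v ∈ I := by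
      intro t v ht htv
      have := I.smul_mem t⁻¹ htv
      rwa [smul_smul, inv_mul_cancel₀ ht, one_smul] at this
    by_cases hc0 : c 0 ≠ 0
    · exact hsmulmem _ _ (mul_ne_zero h4 hc0) hhI
    by_cases hc1 : c 1 ≠ 0
    · have : mul b3 ((8 * c 1) • b2 + (8 * c 3) • b4 + (8 * c 5) • b6) ∈ I :=
        hI _ hvpI b3
      have he : mul b3 ((8 * c 1) • b2 + (8 * c 3) • b4 + (8 * c 5) • b6)
          = (-(8 * c 1)) • b1 := by
        have h32 : mul b3 b2 = -b1 := by rw [hb.anti, hb.mul_x_x']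
        simp only [map_add, map_smul, h32, hb.mul_x'_y, hb.mul_x'_z]
        module
      rw [he] at this
      exact hsmulmem _ _ (by simp [h8, hc1]) this
    by_cases hc2 : c 2 ≠ 0
    · have : mul b2 ((8 * c 2) • b3 + (8 * c 4) • b5 + (8 * c 6) • b7) ∈ I :=
        hI _ hvmI b2
      have he : mul b2 ((8 * c 2) • b3 + (8 * c 4) • b5 + (8 * c 6) • b7)
          = (8 * c 2) • b1 := by
        simp only [map_add, map_smul, hb.mul_x_x', hb.mul_x_y', hb.mul_x_z']
        module
      rw [he] at this
      exact hsmulmem _ _ (by simp [h8, hc2]) this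
    by_cases hc3 : c 3 ≠ 0
    · have : mul b5 ((8 * c 1) • b2 + (8 * c 3) • b4 + (8 * c 5) • b6) ∈ I :=
        hI _ hvpI b5
      have he : mul b5 ((8 * c 1) • b2 + (8 * c 3) • b4 + (8 * c 5) • b6)
          = (-(8 * c 3)) • b1 := by
        have e1 : mul b5 b2 = 0 := by rw [hb.anti, hb.mul_x_y', neg_zero]
        have e2 : mul b5 b4 = -b1 := by rw [hb.anti, hb.mul_y_y']
        simp only [map_add, map_smul, e1, e2, hb.mul_y'_z]
        module
      rw [he] at this
      exact hsmulmem _ _ (by simp [h8, hc3]) this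
    by_cases hc4 : c 4 ≠ 0
    · have : mul b4 ((8 * c 2) • b3 + (8 * c 4) • b5 + (8 * c 6) • b7) ∈ I :=
        hI _ hvmI b4
      have he : mul b4 ((8 * c 2) • b3 + (8 * c 4) • b5 + (8 * c 6) • b7)
          = (8 * c 4) • b1 := by
        have e1 : mul b4 b3 = 0 := by rw [hb.anti, hb.mul_x'_y, neg_zero]
        simp only [map_add, map_smul, e1, hb.mul_y_y', hb.mul_y_z']
        module
      rw [he] at this
      exact hsmulmem _ _ (by simp [h8, hc4]) this
    by_cases hc5 : c 5 ≠ 0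
    · have : mul b7 ((8 * c 1) • b2 + (8 * c 3) • b4 + (8 * c 5) • b6) ∈ I :=
        hI _ hvpI b7
      have he : mul b7 ((8 * c 1) • b2 + (8 * c 3) • b4 + (8 * c 5) • b6)
          = (-(8 * c 5)) • b1 := by
        have e1 : mul b7 b2 = 0 := by rw [hb.anti, hb.mul_x_z', neg_zero]
        have e2 : mul b7 b4 = 0 := by rw [hb.anti, hb.mul_y_z', neg_zero]
        have e3 : mul b7 b6 = -b1 := by rw [hb.anti, hb.mul_z_z']
        simp only [map_add, map_smul, e1, e2, e3]
        module
      rw [he] at this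
      exact hsmulmem _ _ (by simp [h8, hc5]) this
    by_cases hc6 : c 6 ≠ 0
    · have : mul b6 ((8 * c 2) • b3 + (8 * c 4) • b5 + (8 * c 6) • b7) ∈ I :=
        hI _ hvmI b6
      have he : mul b6 ((8 * c 2) • b3 + (8 * c 4) • b5 + (8 * c 6) • b7)
          = (8 * c 6) • b1 := by
        have e1 : mul b6 b3 = 0 := by rw [hb.anti, hb.mul_x'_z, neg_zero]
        have e2 : mul b6 b5 = 0 := by rw [hb.anti, hb.mul_y'_z, neg_zero]
        simp only [map_add, map_smul, e1, e2, hb.mul_z_z']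
        module
      rw [he] at this
      exact hsmulmem _ _ (by simp [h8, hc6]) this
    · exfalso
      apply hune
      rw [← hc]
      push_neg at hc0 hc1 hc2 hc3 hc4 hc5 hc6
      simp [hc0, hc1, hc2, hc3, hc4, hc5, hc6]
  -- from b1 ∈ I, everything is in I
  have hall : ∀ v ∈ Set.range ![b1, b2, b3, b4, b5, b6, b7], v ∈ I := by
    have key : ∀ w : M, ∀ t : F, t ≠ 0 → mul w b1 = t • w → w ∈ I := by
      intro w t ht hw
      have := hI b1 hb1 w
      rw [hw] at this
      have := I.smul_mem t⁻¹ this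
      rwa [smul_smul, inv_mul_cancel₀ ht, one_smul] at this
    intro v hv
    obtain ⟨i, rfl⟩ := hv
    have hn2 : (-2:F) ≠ 0 := by simpa using h2
    fin_cases i
    · exact hb1
    · exact key b2 (-2) hn2 (by rw [hb.anti, hb.mul_h_x]; module)
    · exact key b3 2 h2 (by rw [hb.anti, hb.mul_h_x']; module)
    · exact key b4 (-2) hn2 (by rw [hb.anti, hb.mul_h_y]; module)
    · exact key b5 2 h2 (by rw [hb.anti, hb.mul_h_y']; module)
    · exact key b6 (-2) hn2 (by rw [hb.anti, hb.mul_h_z]; module)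
    · exact key b7 2 h2 (by rw [hb.anti, hb.mul_h_z']; module)
  rw [eq_top_iff, ← hb.spans]
  exact Submodule.span_le.mpr hall

lemma stdBasis_products_span (h2 : (2:F) ≠ 0) {mul : M →ₗ[F] M →ₗ[F] M}
    {b1 b2 b3 b4 b5 b6 b7 : M} (hb : IsStdBasis mul b1 b2 b3 b4 b5 b6 b7) :
    Submodule.span F (Set.image2 (fun a b => mul a b) (Set.univ : Set M) Set.univ) = ⊤ := by
  apply le_antisymm le_top
  rw [← hb.spans]
  apply Submodule.span_le.mpr
  have mem2 : ∀ a b : M, mul a b ∈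
      Submodule.span F (Set.image2 (fun a b => mul a b) (Set.univ : Set M) Set.univ) :=
    fun a b => Submodule.subset_span ⟨a, trivial, b, trivial, rfl⟩
  have key : ∀ (w a b : M) (t : F), t ≠ 0 → mul a b = t • w →
      w ∈ Submodule.span F (Set.image2 (fun a b => mul a b) (Set.univ : Set M) Set.univ) := by
    intro w a b t ht hab
    have := Submodule.smul_mem _ t⁻¹ (mem2 a b)
    rwa [hab, smul_smul, inv_mul_cancel₀ ht, one_smul] at this
  have hn2 : (-2:F) ≠ 0 := by simpa using h2
  intro v hv
  obtain ⟨i, rfl⟩ := hv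
  fin_cases i
  · exact key b1 b2 b3 1 one_ne_zero (by rw [hb.mul_x_x', one_smul])
  · exact key b2 b5 b7 (-2) hn2 (by rw [hb.mul_y'_z']; module)
  · exact key b3 b4 b6 2 h2 (by rw [hb.mul_y_z])
  · exact key b4 b7 b3 (-2) hn2 (by rw [hb.mul_z'_x']; module)
  · exact key b5 b6 b2 2 h2 (by rw [hb.mul_z_x])
  · exact key b6 b3 b5 (-2) hn2 (by rw [hb.mul_x'_y']; module)
  · exact key b7 b2 b4 2 h2 (by rw [hb.mul_x_y])

set_option maxHeartbeats 1600000 in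
set_option synthInstance.maxHeartbeats 400000 in
/-- Lemma 4: if the radical `R` of the Drinfeld double `D(𝕄)` is nonzero, then
`R = R^⊥` (w.r.t. `Q`), `R² = 0`, and `D(𝕄) = 𝕄 + R` is a semidirect sum. -/
theorem statement5 {F : Type*} [Field F] [IsAlgClosed F]
    {M : Type*} [AddCommGroup M] [Module F M]
    (h2 : (2:F) ≠ 0) (h3 : (3:F) ≠ 0)
    (mul : M →ₗ[F] M →ₗ[F] M) (hMal : IsMalcevMul mul)
    (hM : ∃ a₁ a₂ a₃ a₄ a₅ a₆ a₇ : M, IsStdBasis mul a₁ a₂ a₃ a₄ a₅ a₆ a₇)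
    (Δ : M →ₗ[F] M ⊗[F] M) (hbi : IsMalcevBialgebra mul Δ)
    (R : Submodule F (M × Dual F M))
    (hR : IsRadicalOf (doubleMul mul Δ) R) (hRne : R ≠ ⊥) :
    (R : Set (M × Dual F M)) = {p : M × Dual F M | ∀ q ∈ R, q.2 p.1 + p.2 q.1 = 0} ∧
    (∀ u ∈ R, ∀ v ∈ R, doubleMul mul Δ u v = 0) ∧
    LinearMap.range (LinearMap.inl F M (Dual F M)) ⊓ R = ⊥ ∧
    LinearMap.range (LinearMap.inl F M (Dual F M)) ⊔ R = ⊤ := by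
  classical
  obtain ⟨b1, b2, b3, b4, b5, b6, b7, hb⟩ := hM
  obtain ⟨haddl, hsmull, haddr, hsmulr, hBanti, -⟩ :=
    (hbi : IsMalcevFun F (doubleMul mul Δ))
  obtain ⟨hRideal, ⟨nsolv, hnsolv⟩, hRmax⟩ := hR
  -- notation
  set inl : M →ₗ[F] M × Dual F M := LinearMap.inl F M (Dual F M) with hinl
  -- finite dimensionality
  let bb : Basis (Fin 7) F M := Basis.mk hb.indep hb.spans.ge
  haveI instM : FiniteDimensional F M := Module.Finite.of_basis bb
  have hrankM : finrank F M = 7 := by rw [finrank_eq_card_basis bb]; simp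
  haveI instDual : FiniteDimensional F (Dual F M) := inferInstance
  haveI instD : FiniteDimensional F (M × Dual F M) := inferInstance
  haveI instR : FiniteDimensional F ↥R := inferInstance
  haveI instRfree : Module.Free F ↥R := Module.Free.of_divisionRing F ↥R
  haveI instDR : FiniteDimensional F (Dual F ↥R) := Module.Finite.linearMap F F ↥R F
  have hrankD : finrank F (M × Dual F M) = 14 := by
    rw [Module.finrank_prod, hrankM, Subspace.dual_finrank_eq, hrankM]
  -- the subalgebra M'
  have hinl_apply : ∀ a : M, inl a = (a, 0) := fun a => rfl
  have hinlmul : ∀ a b : M, inl (mul a b) = doubleMul mul Δ (inl a) (inl b) := by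
    intro a b
    rw [hinl_apply, hinl_apply, hinl_apply, doubleMul_inl]
  have hM'mul : ∀ u ∈ LinearMap.range inl, ∀ v ∈ LinearMap.range inl,
      doubleMul mul Δ u v ∈ LinearMap.range inl := by
    rintro _ ⟨a, rfl⟩ _ ⟨b, rfl⟩
    exact ⟨mul a b, hinlmul a b⟩
  have hrankM' : finrank F ↥(LinearMap.range inl) = 7 := by
    rw [LinearMap.finrank_range_of_inj LinearMap.inl_injective, hrankM]
  have hM'ne : LinearMap.range inl ≠ ⊥ := by
    intro h
    have hb1 : b1 ≠ 0 := by
      have := hb.indep.ne_zero 0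
      simpa using this
    apply hb1
    have : inl b1 ∈ LinearMap.range inl := LinearMap.mem_range_self _ b1
    rw [h, Submodule.mem_bot] at this
    have := congrArg Prod.fst this
    simpa [hinl_apply] using this
  -- the ideal dichotomy from simplicity of 𝕄
  have hdich : ∀ J : Submodule F (M × Dual F M),
      (∀ u ∈ J, ∀ d, doubleMul mul Δ d u ∈ J) →
      J ⊓ LinearMap.range inl = ⊥ ∨ LinearMap.range inl ≤ J := by
    intro J hJ
    have hSle : J ⊓ LinearMap.range inl ≤ LinearMap.range inl := inf_le_right
    have hIideal : ∀ u ∈ Submodule.comap inl (J ⊓ LinearMap.range inl), ∀ a : M,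
        mul a u ∈ Submodule.comap inl (J ⊓ LinearMap.range inl) := by
      intro u hu a
      rw [Submodule.mem_comap, Submodule.mem_inf] at hu ⊢
      constructor
      · rw [hinlmul]
        exact hJ _ hu.1 (inl a)
      · exact LinearMap.mem_range_self _ _
    rcases stdBasis_simple h2 hb _ hIideal with h | h
    · left
      rw [← Submodule.map_comap_eq_self hSle, h, Submodule.map_bot]
    · right
      have : J ⊓ LinearMap.range inl = LinearMap.range inl := by
        rw [← Submodule.map_comap_eq_self hSle, h, Submodule.map_top]
      rw [← this]
      exact inf_le_left
  -- M'² spans M', so M' is its own derived series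
  have hspanM' : Submodule.span F (Set.image2 (doubleMul mul Δ)
      (LinearMap.range inl : Set (M × Dual F M)) (LinearMap.range inl : Set _)) =
      LinearMap.range inl := by
    apply le_antisymm
    · apply Submodule.span_le.mpr
      rintro _ ⟨u, hu, v, hv, rfl⟩
      exact hM'mul u hu v hv
    · rintro _ ⟨a, rfl⟩
      have ha : a ∈ Submodule.span F
          (Set.image2 (fun a b => mul a b) (Set.univ : Set M) Set.univ) := by
        rw [stdBasis_products_span h2 hb]; trivial
      have hmem : inl a ∈ Submodule.span F
          (⇑inl '' Set.image2 (fun a b => mul a b) (Set.univ : Set M) Set.univ) := by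
        rw [← Submodule.map_span]
        exact Submodule.mem_map_of_mem ha
      refine Submodule.span_mono ?_ hmem
      rintro _ ⟨_, ⟨x, -, y, -, rfl⟩, rfl⟩
      exact ⟨inl x, LinearMap.mem_range_self _ x, inl y, LinearMap.mem_range_self _ y,
        (hinlmul x y).symm⟩
  have hdsM' : ∀ n, derivedSeries (doubleMul mul Δ) (LinearMap.range inl) n =
      LinearMap.range inl := derivedSeries_fixed _ hspanM'
  -- first dichotomy : M' ∩ R = 0
  have hJR : ∀ u ∈ R, ∀ d, doubleMul mul Δ d u ∈ R := fun u hu d => (hRideal u hu d).1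
  have hRM : R ⊓ LinearMap.range inl = ⊥ := by
    rcases hdich R hJR with h | h
    · exact h
    · exfalso
      apply hM'ne
      have : LinearMap.range inl ≤ (⊥ : Submodule F (M × Dual F M)) := by
        calc LinearMap.range inl
            = derivedSeries (doubleMul mul Δ) (LinearMap.range inl) nsolv := (hdsM' nsolv).symm
          _ ≤ derivedSeries (doubleMul mul Δ) R nsolv := derivedSeries_mono _ h nsolv
          _ = ⊥ := hnsolv
      exact le_bot_iff.mp this
  have hconc3 : LinearMap.range inl ⊓ R = ⊥ := by rw [inf_comm]; exact hRM
  -- rank of R is at most 7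
  have hrankRle : finrank F ↥R ≤ 7 := by
    have hsi := Submodule.finrank_sup_add_finrank_inf_eq R (LinearMap.range inl)
    rw [hRM, finrank_bot, hrankM'] at hsi
    have hle : finrank F ↥(R ⊔ LinearMap.range inl) ≤ 14 :=
      le_trans (Submodule.finrank_le _) (le_of_eq hrankD)
    omega
  -- the orthogonal complement of R
  set φ : (M × Dual F M) →ₗ[F] Dual F ↥R :=
    R.subtype.dualMap ∘ₗ (Qform : (M × Dual F M) →ₗ[F] Dual F (M × Dual F M)) with hφ
  set Rperp : Submodule F (M × Dual F M) := LinearMap.ker φ with hRperpdef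
  have hperp_mem : ∀ p : M × Dual F M, p ∈ Rperp ↔ ∀ q ∈ R, Qform p q = 0 := by
    intro p
    rw [hRperpdef, LinearMap.mem_ker, hφ]
    constructor
    · intro h q hq
      have := congrArg (fun ψ => ψ ⟨q, hq⟩) h
      simpa using this
    · intro h
      ext q
      simpa using h q q.2
  have hrankPerp : 14 ≤ finrank F ↥Rperp + finrank F ↥R := by
    have hrn := LinearMap.finrank_range_add_finrank_ker φ
    have hrn' : finrank F ↥(LinearMap.range φ) + finrank F ↥Rperp = 14 := by
      rw [hRperpdef]
      exact hrn.trans hrankD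
    have hdual : finrank F (Dual F ↥R) = finrank F ↥R :=
      Subspace.dual_finrank_eq (K := F) (V := ↥R)
    have hr1 : finrank F ↥(LinearMap.range φ) ≤ finrank F ↥R :=
      le_trans (Submodule.finrank_le _) (le_of_eq hdual)
    omega
  -- Rperp is an ideal
  have hPideal : ∀ p ∈ Rperp, ∀ d, doubleMul mul Δ d p ∈ Rperp ∧
      doubleMul mul Δ p d ∈ Rperp := by
    intro p hp d
    have hmain : doubleMul mul Δ d p ∈ Rperp := by
      rw [hperp_mem]
      intro q hq
      have e1 : Qform (doubleMul mul Δ q d) p = Qform q (doubleMul mul Δ d p) :=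
        Qform_invariant mul Δ q d p
      have e2 : Qform (doubleMul mul Δ q d) p = 0 := by
        rw [Qform_symm]
        exact (hperp_mem p).mp hp _ ((hRideal q hq d).2)
      calc Qform (doubleMul mul Δ d p) q = Qform q (doubleMul mul Δ d p) := Qform_symm _ _
        _ = 0 := by rw [← e1]; exact e2
    refine ⟨hmain, ?_⟩
    rw [hBanti]
    exact Rperp.neg_mem hmain
  have hPid' : ∀ u ∈ Rperp, ∀ d, doubleMul mul Δ d u ∈ Rperp :=
    fun u hu d => (hPideal u hu d).1
  -- R · Rperp = 0
  have hRRperp : ∀ u ∈ R, ∀ v ∈ Rperp, doubleMul mul Δ u v = 0 := by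
    intro u hu v hv
    apply Qform_nondeg
    intro w
    rw [Qform_invariant]
    have hm : doubleMul mul Δ v w ∈ Rperp := (hPideal v hv w).2
    rw [Qform_symm]
    exact (hperp_mem _).mp hm u hu
  have hPerpR : ∀ v ∈ Rperp, ∀ u ∈ R, doubleMul mul Δ v u = 0 := by
    intro v hv u hu
    rw [hBanti, hRRperp u hu v hv, neg_zero]
  -- second dichotomy : Rperp ∩ M' = 0, hence ranks are 7
  have hPM : Rperp ⊓ LinearMap.range inl = ⊥ := by
    rcases hdich Rperp hPid' with h | h
    · exact h
    · exfalso
      apply hRne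
      have hRM' : R ≤ LinearMap.range inl := by
        intro q hq
        refine ⟨q.1, ?_⟩
        rw [hinl_apply]
        have hq2 : q.2 = 0 := by
          ext a
          have := (hperp_mem (inl a)).mp (h (LinearMap.mem_range_self _ a)) q hq
          simpa [Qform_apply, hinl_apply] using this
        rw [← hq2]
      have : R ≤ ⊥ := by
        rw [← hRM]
        exact le_inf le_rfl hRM'
      exact le_bot_iff.mp this
  have hrankPle : finrank F ↥Rperp ≤ 7 := by
    have hsi := Submodule.finrank_sup_add_finrank_inf_eq Rperp (LinearMap.range inl)
    rw [hPM, finrank_bot, hrankM'] at hsi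
    have hle : finrank F ↥(Rperp ⊔ LinearMap.range inl) ≤ 14 :=
      le_trans (Submodule.finrank_le _) (le_of_eq hrankD)
    omega
  have hrankR7 : finrank F ↥R = 7 := by omega
  have hrankP7 : finrank F ↥Rperp = 7 := by omega
  -- conclusion 4
  have hconc4 : LinearMap.range inl ⊔ R = ⊤ := by
    apply Submodule.eq_top_of_finrank_eq
    have hsi := Submodule.finrank_sup_add_finrank_inf_eq (LinearMap.range inl) R
    rw [hconc3, finrank_bot, hrankM', hrankR7] at hsi
    have : finrank F ↥(LinearMap.range inl ⊔ R) = 14 := by omega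
    exact this.trans hrankD.symm
  -- J = R ⊔ Rperp is an ideal
  have hJideal : ∀ u ∈ R ⊔ Rperp, ∀ d, doubleMul mul Δ d u ∈ R ⊔ Rperp := by
    intro u hu d
    obtain ⟨r, hr, s, hs, rfl⟩ := Submodule.mem_sup.mp hu
    rw [haddr]
    exact Submodule.add_mem _ (Submodule.mem_sup_left (hJR r hr d))
      (Submodule.mem_sup_right (hPid' s hs d))
  -- third dichotomy : R = Rperp
  have hReq : Rperp = R := by
    rcases hdich (R ⊔ Rperp) hJideal with h | h
    · -- J ∩ M' = 0 : then J = R and Rperp ≤ R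
      have hrankJle : finrank F ↥(R ⊔ Rperp) ≤ 7 := by
        have hsi := Submodule.finrank_sup_add_finrank_inf_eq (R ⊔ Rperp) (LinearMap.range inl)
        rw [h, finrank_bot, hrankM'] at hsi
        have hle : finrank F ↥((R ⊔ Rperp) ⊔ LinearMap.range inl) ≤ 14 :=
          le_trans (Submodule.finrank_le _) (le_of_eq hrankD)
        omega
      have hRJ : R = R ⊔ Rperp :=
        Submodule.eq_of_le_of_finrank_le le_sup_left (by omega)
      have hPR : Rperp ≤ R := by rw [hRJ]; exact le_sup_right
      exact Submodule.eq_of_le_of_finrank_le hPR (by omega)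
    · -- M' ≤ J : impossible
      exfalso
      have hJtop : R ⊔ Rperp = ⊤ := by
        rw [eq_top_iff, ← hconc4]
        exact sup_le h le_sup_left
      have hdisj : R ⊓ Rperp = ⊥ := by
        rw [eq_bot_iff]
        intro n hn
        rw [Submodule.mem_inf] at hn
        have hQn : ∀ w, Qform n w = 0 := by
          intro w
          have hw : w ∈ R ⊔ Rperp := by rw [hJtop]; trivial
          obtain ⟨r, hr, s, hs, rfl⟩ := Submodule.mem_sup.mp hw
          rw [map_add]
          have e1 : Qform n r = 0 := (hperp_mem n).mp hn.2 r hr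
          have e2 : Qform n s = 0 := by
            rw [Qform_symm]
            exact (hperp_mem s).mp hs n hn.1
          rw [e1, e2, add_zero]
        rw [Submodule.mem_bot]
        exact Qform_nondeg n hQn
      have hcompl : IsCompl R Rperp := ⟨disjoint_iff.mpr hdisj, codisjoint_iff.mpr hJtop⟩
      set π : (M × Dual F M) →ₗ[F] M × Dual F M :=
        R.subtype ∘ₗ Submodule.projectionOnto R Rperp hcompl with hπdef
      have hπR : ∀ x ∈ R, π x = x := by
        intro x hx
        exact congrArg R.subtype (Submodule.linearProjOfIsCompl_apply_left hcompl ⟨x, hx⟩)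
      have hπP : ∀ x ∈ Rperp, π x = 0 := by
        intro x hx
        have := Submodule.linearProjOfIsCompl_apply_right hcompl ⟨x, hx⟩
        rw [hπdef]
        simp only [LinearMap.comp_apply]
        rw [this, map_zero]
      have hπmem : ∀ u, π u ∈ R := fun u =>
        Submodule.coe_mem (Submodule.linearProjOfIsCompl R Rperp hcompl u)
      have hdecomp : ∀ u : M × Dual F M, ∃ r ∈ R, ∃ s ∈ Rperp, r + s = u := by
        intro u
        exact Submodule.mem_sup.mp (by rw [hJtop]; trivial)
      have hπmul : ∀ u v, π (doubleMul mul Δ u v) =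
          doubleMul mul Δ (π u) (π v) := by
        intro u v
        obtain ⟨r, hr, s, hs, rfl⟩ := hdecomp u
        obtain ⟨r', hr', s', hs', rfl⟩ := hdecomp v
        have hBrr' : doubleMul mul Δ r r' ∈ R := hJR r' hr' r
        have hBss' : doubleMul mul Δ s s' ∈ Rperp := hPid' s' hs' s
        have e : doubleMul mul Δ (r + s) (r' + s')
            = doubleMul mul Δ r r' + doubleMul mul Δ s s' := by
          rw [haddl, haddr, haddr, hRRperp r hr s' hs', hPerpR s hs r' hr']
          abel
        have eu : π (r + s) = r := by rw [map_add, hπR r hr, hπP s hs, add_zero]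
        have ev : π (r' + s') = r' := by rw [map_add, hπR r' hr', hπP s' hs', add_zero]
        rw [e, map_add, hπR _ hBrr', hπP _ hBss', add_zero, eu, ev]
      have hchain : Submodule.map π (LinearMap.range inl) ≤ ⊥ := by
        have hmapM'R : Submodule.map π (LinearMap.range inl) ≤ R := by
          rintro _ ⟨x, -, rfl⟩
          exact hπmem x
        calc Submodule.map π (LinearMap.range inl)
            = Submodule.map π (derivedSeries (doubleMul mul Δ) (LinearMap.range inl) nsolv) := by
              rw [hdsM' nsolv]
          _ ≤ derivedSeries (doubleMul mul Δ) (Submodule.map π (LinearMap.range inl)) nsolv :=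
              derivedSeries_map _ π hπmul _ nsolv
          _ ≤ derivedSeries (doubleMul mul Δ) R nsolv := derivedSeries_mono _ hmapM'R nsolv
          _ = ⊥ := hnsolv
      have hMP : LinearMap.range inl ≤ Rperp := by
        intro x hx
        have hπx : π x = 0 := by
          have : π x ∈ (⊥ : Submodule F (M × Dual F M)) :=
            hchain (Submodule.mem_map_of_mem hx)
          simpa using this
        obtain ⟨r, hr, s, hs, rfl⟩ := hdecomp x
        have hr0 : r = 0 := by
          rw [map_add, hπR r hr, hπP s hs, add_zero] at hπx
          exact hπx
        rw [hr0, zero_add]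
        exact hs
      apply hM'ne
      have : LinearMap.range inl ≤ Rperp ⊓ LinearMap.range inl := le_inf hMP le_rfl
      rw [hPM] at this
      exact le_bot_iff.mp this
  -- assemble the conclusions
  refine ⟨?_, ?_, hconc3, hconc4⟩
  · have hset : (R : Set (M × Dual F M)) = (Rperp : Set (M × Dual F M)) := by rw [hReq]
    rw [hset]
    ext p
    simp only [SetLike.mem_coe, Set.mem_setOf_eq]
    rw [hperp_mem p]
    constructor
    · intro h q hq
      have := h q hq
      rwa [Qform_apply] at this
    · intro h q hq
      rw [Qform_apply]
      exact h q hq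
  · intro u hu v hv
    exact hRRperp u hu v (by rw [hReq]; exact hv)

end MalcevPaper
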